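/- (Strata-fixed-effects regression, general decomposition.) Assume positivity. Then the SFE-regression slope satisfies Δ_sfe = Δ_dce^f + Δ_sel^f, where Δ_dce^f = Σ_{a∈𝒜} ω_sfe(a)·E[Y(1,a) − Y(0,a) | D=1, A=a] and Δ_sel^f = Σ_{a∈𝒜} ω_sfe(a)·(E[Y(0,a) | D=1, A=a] − E[Y(0,a) | D=0, A=a]); moreover Σ_{a∈𝒜} ω_sfe(a) = 1 and ω_sfe(a) ≥ 0 for all a∈𝒜. -/

import Mathlib

open MeasureTheory ProbabilityTheory BigOperators

noncomputable section

variable {Ω : Type} [MeasurableSpace Ω] {K : ℕ}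

/-- Expectation of a real-valued random variable. -/
def Exp (P : Measure Ω) (Z : Ω → ℝ) : ℝ := ∫ ω, Z ω ∂P

/-- Probability of an event, as a real number. -/
def Pr (P : Measure Ω) (s : Set Ω) : ℝ := (P s).toReal

/-- Conditional expectation given an event, defined as a ratio. -/
def CE (P : Measure Ω) (Z : Ω → ℝ) (s : Set Ω) : ℝ :=
  Exp P (fun ω => Z ω * s.indicator (fun _ => (1:ℝ)) ω) / Pr P s

/-- Covariance of two real-valued random variables. -/
def Cov (P : Measure Ω) (Z W : Ω → ℝ) : ℝ :=
  Exp P (fun ω => Z ω * W ω) - Exp P Z * Exp P W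

/-- The event {D = d, A = a}. -/
def evDA (D : Ω → ℕ) (A : Ω → Fin K → ℕ) (d : ℕ) (a : Fin K → ℕ) : Set Ω :=
  {ω | D ω = d ∧ A ω = a}

/-- The event {D = d}. -/
def evD (D : Ω → ℕ) (d : ℕ) : Set Ω := {ω | D ω = d}

/-- The event {A = a}. -/
def evA (A : Ω → Fin K → ℕ) (a : Fin K → ℕ) : Set Ω := {ω | A ω = a}

/-- π_d(a) = P(A = a | D = d). -/
def piP (P : Measure Ω) (D : Ω → ℕ) (A : Ω → Fin K → ℕ) (d : ℕ) (a : Fin K → ℕ) : ℝ :=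
  Pr P (evDA D A d a) / Pr P (evD D d)

/-- The observed outcome Y = Σ_{(d,a)} Y(d,a)·1{D=d, A=a}. -/
def Yobs (D : Ω → ℕ) (A : Ω → Fin K → ℕ) (𝒜 : Finset (Fin K → ℕ))
    (Ypot : ℕ → (Fin K → ℕ) → Ω → ℝ) : Ω → ℝ :=
  fun ω => ∑ d ∈ ({0, 1} : Finset ℕ), ∑ a ∈ 𝒜,
    Ypot d a ω * (if D ω = d ∧ A ω = a then (1:ℝ) else 0)

/-- μ(d,a) = E[Y(d,a)]. -/
def muP (P : Measure Ω) (Ypot : ℕ → (Fin K → ℕ) → Ω → ℝ) (d : ℕ) (a : Fin K → ℕ) : ℝ :=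
  Exp P (Ypot d a)

/-- The random vector (D, A) as a real-valued family indexed by Unit ⊕ Fin K. -/
def DAvec (D : Ω → ℕ) (A : Ω → Fin K → ℕ) : Unit ⊕ Fin K → Ω → ℝ :=
  Sum.elim (fun _ ω => (D ω : ℝ)) (fun j ω => (A ω j : ℝ))

/-- The (K+1)×(K+1) covariance matrix of (D, A). -/
def covDAmat (P : Measure Ω) (D : Ω → ℕ) (A : Ω → Fin K → ℕ) :
    Matrix (Unit ⊕ Fin K) (Unit ⊕ Fin K) ℝ :=
  Matrix.of fun i j => Cov P (DAvec D A i) (DAvec D A j)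

/-- The K×K covariance matrix Var(A). -/
def varAmat (P : Measure Ω) (A : Ω → Fin K → ℕ) : Matrix (Fin K) (Fin K) ℝ :=
  Matrix.of fun i j => Cov P (fun ω => (A ω i : ℝ)) (fun ω => (A ω j : ℝ))

/-- The row vector Cov(D, A). -/
def covDA (P : Measure Ω) (D : Ω → ℕ) (A : Ω → Fin K → ℕ) : Fin K → ℝ :=
  fun j => Cov P (fun ω => (D ω : ℝ)) (fun ω => (A ω j : ℝ))

/-- M = Cov(D,A) ⬝ Var(A)⁻¹. -/
def Mlong (P : Measure Ω) (D : Ω → ℕ) (A : Ω → Fin K → ℕ) : Fin K → ℝ :=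
  fun j => ∑ i, covDA P D A i * (varAmat P A)⁻¹ i j

/-- Var(D). -/
def varD (P : Measure Ω) (D : Ω → ℕ) : ℝ :=
  Cov P (fun ω => (D ω : ℝ)) (fun ω => (D ω : ℝ))

/-- denom = Var(D) − Cov(D,A)·Var(A)⁻¹·Cov(A,D). -/
def denomL (P : Measure Ω) (D : Ω → ℕ) (A : Ω → Fin K → ℕ) : ℝ :=
  varD P D - ∑ j, Mlong P D A j * covDA P D A j

/-- The long-regression weight ω_dce^l(a). -/
def wdceL (P : Measure Ω) (D : Ω → ℕ) (A : Ω → Fin K → ℕ) (a : Fin K → ℕ) : ℝ :=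
  piP P D A 1 a *
    (varD P D - Pr P (evD D 1) *
      ∑ j, Mlong P D A j * ((a j : ℝ) - Exp P (fun ω => (A ω j : ℝ)))) / denomL P D A

/-- The long-regression weight ω_ind^l(a). -/
def windL (P : Measure Ω) (D : Ω → ℕ) (A : Ω → Fin K → ℕ) (a : Fin K → ℕ) : ℝ :=
  (varD P D * (piP P D A 1 a - piP P D A 0 a) -
    Pr P (evA A a) * ∑ j, Mlong P D A j * ((a j : ℝ) - Exp P (fun ω => (A ω j : ℝ))))
  / denomL P D A

/-- The residual of the long regression of Y on (1, D, A). -/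
def residLong (D : Ω → ℕ) (A : Ω → Fin K → ℕ) (𝒜 : Finset (Fin K → ℕ))
    (Ypot : ℕ → (Fin K → ℕ) → Ω → ℝ) (Δ θ₀ : ℝ) (θ : Fin K → ℝ) : Ω → ℝ :=
  fun ω => Yobs D A 𝒜 Ypot ω - Δ * (D ω : ℝ) - θ₀ - ∑ j, θ j * (A ω j : ℝ)

/-- The random vector W = (A, A·D) as a real-valued family indexed by Fin K ⊕ Fin K. -/
def Wvec (D : Ω → ℕ) (A : Ω → Fin K → ℕ) : Fin K ⊕ Fin K → Ω → ℝ :=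
  Sum.elim (fun j ω => (A ω j : ℝ)) (fun j ω => (A ω j : ℝ) * (D ω : ℝ))

/-- The 2K×2K covariance matrix Var(W), W = (A, AD). -/
def varWmat (P : Measure Ω) (D : Ω → ℕ) (A : Ω → Fin K → ℕ) :
    Matrix (Fin K ⊕ Fin K) (Fin K ⊕ Fin K) ℝ :=
  Matrix.of fun u v => Cov P (Wvec D A u) (Wvec D A v)

/-- The row vector Cov(D, W). -/
def covDW (P : Measure Ω) (D : Ω → ℕ) (A : Ω → Fin K → ℕ) : Fin K ⊕ Fin K → ℝ :=
  fun u => Cov P (fun ω => (D ω : ℝ)) (Wvec D A u)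

/-- M = Cov(D,W) ⬝ Var(W)⁻¹ for the interaction regression. -/
def Minter (P : Measure Ω) (D : Ω → ℕ) (A : Ω → Fin K → ℕ) : Fin K ⊕ Fin K → ℝ :=
  fun v => ∑ u, covDW P D A u * (varWmat P D A)⁻¹ u v

/-- denom = Var(D) − M·Cov(W,D) for the interaction regression. -/
def denomI (P : Measure Ω) (D : Ω → ℕ) (A : Ω → Fin K → ℕ) : ℝ :=
  varD P D - ∑ v, Minter P D A v * covDW P D A v

/-- E[A_j | D = 1]. -/
def condA1 (P : Measure Ω) (D : Ω → ℕ) (A : Ω → Fin K → ℕ) (j : Fin K) : ℝ :=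
  CE P (fun ω => (A ω j : ℝ)) (evD D 1)

/-- The random vector (D, A, AD) as a real-valued family. -/
def DADvec (D : Ω → ℕ) (A : Ω → Fin K → ℕ) : Unit ⊕ (Fin K ⊕ Fin K) → Ω → ℝ :=
  Sum.elim (fun _ ω => (D ω : ℝ)) (Wvec D A)

/-- The (2K+1)×(2K+1) covariance matrix of (D, A, AD). -/
def covDADmat (P : Measure Ω) (D : Ω → ℕ) (A : Ω → Fin K → ℕ) :
    Matrix (Unit ⊕ (Fin K ⊕ Fin K)) (Unit ⊕ (Fin K ⊕ Fin K)) ℝ :=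
  Matrix.of fun i j => Cov P (DADvec D A i) (DADvec D A j)

/-- The interaction-regression weight ω_dce^i(a). -/
def wdceI (P : Measure Ω) (D : Ω → ℕ) (A : Ω → Fin K → ℕ) (a : Fin K → ℕ) : ℝ :=
  piP P D A 1 a *
    (varD P D
      - Pr P (evD D 1) *
          ∑ j, Minter P D A (Sum.inl j) * ((a j : ℝ) - Exp P (fun ω => (A ω j : ℝ)))
      - Pr P (evD D 1) *
          ∑ j, Minter P D A (Sum.inr j) * ((a j : ℝ) - Pr P (evD D 1) * condA1 P D A j))
  / denomI P D A

/-- The interaction-regression weight ω_ind^i(a). -/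
def windI (P : Measure Ω) (D : Ω → ℕ) (A : Ω → Fin K → ℕ) (a : Fin K → ℕ) : ℝ :=
  (varD P D * (piP P D A 1 a - piP P D A 0 a)
    - ∑ j, Minter P D A (Sum.inl j) * Pr P (evA A a) * ((a j : ℝ) - Exp P (fun ω => (A ω j : ℝ)))
    - Pr P (evD D 1) *
        ∑ j, Minter P D A (Sum.inr j) *
          (piP P D A 1 a * (a j : ℝ) - Pr P (evA A a) * condA1 P D A j))
  / denomI P D A

/-- The residual of the interaction regression of Y on (1, D, A, AD). -/
def residInter (D : Ω → ℕ) (A : Ω → Fin K → ℕ) (𝒜 : Finset (Fin K → ℕ))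
    (Ypot : ℕ → (Fin K → ℕ) → Ω → ℝ) (Δ θ₀ : ℝ) (θ lam : Fin K → ℝ) : Ω → ℝ :=
  fun ω => Yobs D A 𝒜 Ypot ω - Δ * (D ω : ℝ) - θ₀ - (∑ j, θ j * (A ω j : ℝ))
    - ∑ j, lam j * (A ω j : ℝ) * (D ω : ℝ)

/-- P(D = d | A = a). -/
def condDgivenA (P : Measure Ω) (D : Ω → ℕ) (A : Ω → Fin K → ℕ) (d : ℕ) (a : Fin K → ℕ) : ℝ :=
  Pr P (evDA D A d a) / Pr P (evA A a)

/-- The SFE weight ω_sfe(a). -/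
def wsfe (P : Measure Ω) (D : Ω → ℕ) (A : Ω → Fin K → ℕ) (𝒜 : Finset (Fin K → ℕ))
    (a : Fin K → ℕ) : ℝ :=
  condDgivenA P D A 1 a * condDgivenA P D A 0 a * Pr P (evA A a) /
    ∑ a' ∈ 𝒜, condDgivenA P D A 1 a' * condDgivenA P D A 0 a' * Pr P (evA A a')

/-- The residual of the SFE regression of Y on (D, {1{A=a}}). -/
def residSFE (D : Ω → ℕ) (A : Ω → Fin K → ℕ) (𝒜 : Finset (Fin K → ℕ))
    (Ypot : ℕ → (Fin K → ℕ) → Ω → ℝ) (Δ : ℝ) (θ : (Fin K → ℕ) → ℝ) : Ω → ℝ :=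
  fun ω => Yobs D A 𝒜 Ypot ω - Δ * (D ω : ℝ) -
    ∑ a ∈ 𝒜, θ a * (if A ω = a then (1:ℝ) else 0)

/-- The residual of the saturated regression of Y on ({1{A=a}}, {D·1{A=a}}). -/
def residSAT (D : Ω → ℕ) (A : Ω → Fin K → ℕ) (𝒜 : Finset (Fin K → ℕ))
    (Ypot : ℕ → (Fin K → ℕ) → Ω → ℝ) (γ Δsat : (Fin K → ℕ) → ℝ) : Ω → ℝ :=
  fun ω => Yobs D A 𝒜 Ypot ω - (∑ a ∈ 𝒜, γ a * (if A ω = a then (1:ℝ) else 0)) -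
    ∑ a ∈ 𝒜, Δsat a * (D ω : ℝ) * (if A ω = a then (1:ℝ) else 0)


/-- indicator of {D=d, A=a} as an if-expression (auxiliary). -/
def chiDA (D : Ω → ℕ) (A : Ω → Fin K → ℕ) (d : ℕ) (a : Fin K → ℕ) : Ω → ℝ :=
  fun ω => if D ω = d ∧ A ω = a then 1 else 0

lemma measurableSet_evDA {D : Ω → ℕ} {A : Ω → Fin K → ℕ} (hD : Measurable D)
    (hA : Measurable A) (d : ℕ) (a : Fin K → ℕ) : MeasurableSet (evDA D A d a) := by
  have : evDA D A d a = D ⁻¹' {d} ∩ A ⁻¹' {a} := by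
    ext ω; simp [evDA, Set.mem_preimage]
  rw [this]
  exact (hD (measurableSet_singleton d)).inter (hA (measurableSet_singleton a))

lemma measurableSet_evA {A : Ω → Fin K → ℕ} (hA : Measurable A) (a : Fin K → ℕ) :
    MeasurableSet (evA A a) := by
  have : evA A a = A ⁻¹' {a} := by ext ω; simp [evA, Set.mem_preimage]
  rw [this]; exact hA (measurableSet_singleton a)

lemma mul_chiDA_eq_indicator (D : Ω → ℕ) (A : Ω → Fin K → ℕ) (d : ℕ) (a : Fin K → ℕ)
    (f : Ω → ℝ) : (fun ω => f ω * chiDA D A d a ω) = (evDA D A d a).indicator f := by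
  funext ω; by_cases h : D ω = d ∧ A ω = a <;>
    simp [chiDA, evDA, Set.indicator_apply, h]

lemma chiDA_eq_indicator_one (D : Ω → ℕ) (A : Ω → Fin K → ℕ) (d : ℕ) (a : Fin K → ℕ)
    (ω : Ω) : (evDA D A d a).indicator (fun _ => (1:ℝ)) ω = chiDA D A d a ω := by
  by_cases h : D ω = d ∧ A ω = a <;> simp [chiDA, evDA, Set.indicator_apply, h]

lemma integrable_mul_chiDA {P : Measure Ω} {f : Ω → ℝ} (hf : Integrable f P)
    {D : Ω → ℕ} {A : Ω → Fin K → ℕ} (hD : Measurable D) (hA : Measurable A)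
    (d : ℕ) (a : Fin K → ℕ) : Integrable (fun ω => f ω * chiDA D A d a ω) P := by
  rw [mul_chiDA_eq_indicator]
  exact hf.indicator (measurableSet_evDA hD hA d a)

lemma integrable_chiDA (P : Measure Ω) [IsFiniteMeasure P] {D : Ω → ℕ} {A : Ω → Fin K → ℕ}
    (hD : Measurable D) (hA : Measurable A) (d : ℕ) (a : Fin K → ℕ) :
    Integrable (chiDA D A d a) P := by
  have := integrable_mul_chiDA (integrable_const (1:ℝ)) hD hA d a (P := P)
  simpa using this

lemma exp_chiDA (P : Measure Ω) [IsFiniteMeasure P] {D : Ω → ℕ} {A : Ω → Fin K → ℕ}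
    (hD : Measurable D) (hA : Measurable A) (d : ℕ) (a : Fin K → ℕ) :
    Exp P (chiDA D A d a) = Pr P (evDA D A d a) := by
  have h : chiDA D A d a = (evDA D A d a).indicator (fun _ => (1:ℝ)) := by
    have := mul_chiDA_eq_indicator D A d a (fun _ => (1:ℝ))
    simpa using this
  rw [Exp, h, integral_indicator_const _ (measurableSet_evDA hD hA d a)]
  simp [Pr, Measure.real]

lemma exp_chiA (P : Measure Ω) [IsFiniteMeasure P] {A : Ω → Fin K → ℕ}
    (hA : Measurable A) (a : Fin K → ℕ) :
    Exp P (fun ω => if A ω = a then (1:ℝ) else 0) = Pr P (evA A a) := by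
  have h : (fun ω => if A ω = a then (1:ℝ) else 0)
      = (evA A a).indicator (fun _ => (1:ℝ)) := by
    funext ω; by_cases h : A ω = a <;> simp [evA, Set.indicator_apply, h]
  rw [Exp, h, integral_indicator_const _ (measurableSet_evA hA a)]
  simp [Pr, Measure.real]

lemma sfe_algebra {ι : Type} [DecidableEq ι] (s : Finset ι) (hne : s.Nonempty)
    (p0 p1 q F0 F1 G w θ : ι → ℝ) (S Δ : ℝ)
    (hp0 : ∀ a ∈ s, 0 < p0 a) (hp1 : ∀ a ∈ s, 0 < p1 a)
    (hq : ∀ a ∈ s, q a = p0 a + p1 a)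
    (hS : S = ∑ a ∈ s, (p1 a / q a) * (p0 a / q a) * q a)
    (hw : ∀ a ∈ s, w a = (p1 a / q a) * (p0 a / q a) * q a / S)
    (hE1 : ∑ a ∈ s, (F1 a - Δ * p1 a - θ a * p1 a) = 0)
    (hE2 : ∀ a ∈ s, F0 a + F1 a - Δ * p1 a - θ a * p0 a - θ a * p1 a = 0) :
    Δ = (∑ a ∈ s, w a * ((F1 a - G a) / p1 a))
        + (∑ a ∈ s, w a * (G a / p1 a - F0 a / p0 a))
    ∧ (∑ a ∈ s, w a) = 1 ∧ ∀ a ∈ s, 0 ≤ w a := by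
  have hqpos : ∀ a ∈ s, 0 < q a := fun a ha => (hq a ha) ▸ add_pos (hp0 a ha) (hp1 a ha)
  have htpos : ∀ a ∈ s, 0 < (p1 a / q a) * (p0 a / q a) * q a := fun a ha =>
    mul_pos (mul_pos (div_pos (hp1 a ha) (hqpos a ha)) (div_pos (hp0 a ha) (hqpos a ha)))
      (hqpos a ha)
  have hSpos : 0 < S := hS ▸ Finset.sum_pos htpos hne
  have hwsum : (∑ a ∈ s, w a) = 1 := by
    rw [Finset.sum_congr rfl hw, ← Finset.sum_div, ← hS, div_self hSpos.ne']
  have hwnn : ∀ a ∈ s, 0 ≤ w a := fun a ha =>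
    (hw a ha) ▸ div_nonneg (htpos a ha).le hSpos.le
  refine ⟨?_, hwsum, hwnn⟩
  have hkey : ∀ a ∈ s, F1 a - Δ * p1 a - θ a * p1 a
      = ((F1 a * p0 a - F0 a * p1 a) - Δ * (p1 a * p0 a)) / q a := by
    intro a ha
    have hθ : θ a * (p0 a + p1 a) = F0 a + F1 a - Δ * p1 a := by linarith [hE2 a ha]
    rw [hq a ha, eq_div_iff (by nlinarith [hp0 a ha, hp1 a ha] : (p0 a + p1 a) ≠ 0)]
    linear_combination (- p1 a) * hθ
  have hE1' : (∑ a ∈ s, (F1 a * p0 a - F0 a * p1 a) / q a)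
      - Δ * (∑ a ∈ s, p1 a * p0 a / q a) = 0 := by
    rw [Finset.mul_sum, ← Finset.sum_sub_distrib, ← hE1]
    refine Finset.sum_congr rfl fun a ha => ?_
    rw [hkey a ha]; ring
  have hSeq : S = ∑ a ∈ s, p1 a * p0 a / q a := by
    rw [hS]; refine Finset.sum_congr rfl fun a ha => ?_
    field_simp [(hqpos a ha).ne']
  have hΔS : Δ * S = ∑ a ∈ s, (F1 a * p0 a - F0 a * p1 a) / q a := by
    rw [hSeq]; linarith [hE1']
  have hRHS : (∑ a ∈ s, w a * ((F1 a - G a) / p1 a))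
        + (∑ a ∈ s, w a * (G a / p1 a - F0 a / p0 a))
      = (∑ a ∈ s, (F1 a * p0 a - F0 a * p1 a) / q a) / S := by
    rw [← Finset.sum_add_distrib, Finset.sum_div]
    refine Finset.sum_congr rfl fun a ha => ?_
    have hw' : w a = p1 a * p0 a / (q a * S) := by
      rw [hw a ha, ← div_div]
      field_simp [(hqpos a ha).ne', hSpos.ne']
    rw [hw', div_div]
    field_simp [(hqpos a ha).ne', (hp0 a ha).ne', (hp1 a ha).ne', hSpos.ne']
    ring
  rw [hRHS, ← hΔS, mul_div_assoc, div_self hSpos.ne', mul_one]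

/-- Strata-fixed-effects regression, general decomposition (Theorem B.6 / thm:sfe_pre). -/
theorem sfe_regression_decomposition
    (P : Measure Ω) [IsProbabilityMeasure P]
    (D : Ω → ℕ) (A : Ω → Fin K → ℕ) (𝒜 : Finset (Fin K → ℕ))
    (Ypot : ℕ → (Fin K → ℕ) → Ω → ℝ)
    (hD : Measurable D) (hA : Measurable A)
    (hDbin : ∀ ω, D ω = 0 ∨ D ω = 1)
    (hAsupp : ∀ ω, A ω ∈ 𝒜) (h𝒜0 : (0 : Fin K → ℕ) ∈ 𝒜)
    (hInt : ∀ d ∈ ({0, 1} : Finset ℕ), ∀ a ∈ 𝒜, Integrable (Ypot d a) P)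
    (hpos : ∀ d ∈ ({0, 1} : Finset ℕ), ∀ a ∈ 𝒜, 0 < Pr P (evDA D A d a))
    (Δsfe : ℝ) (θ : (Fin K → ℕ) → ℝ)
    (hO1 : Exp P (fun ω => residSFE D A 𝒜 Ypot Δsfe θ ω * (D ω : ℝ)) = 0)
    (hO2 : ∀ a ∈ 𝒜,
      Exp P (fun ω => residSFE D A 𝒜 Ypot Δsfe θ ω * (if A ω = a then (1:ℝ) else 0)) = 0)
    :
    Δsfe
      = (∑ a ∈ 𝒜, wsfe P D A 𝒜 a *
            CE P (fun ω => Ypot 1 a ω - Ypot 0 a ω) (evDA D A 1 a))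
        + (∑ a ∈ 𝒜, wsfe P D A 𝒜 a *
            (CE P (Ypot 0 a) (evDA D A 1 a) - CE P (Ypot 0 a) (evDA D A 0 a)))
    ∧ (∑ a ∈ 𝒜, wsfe P D A 𝒜 a) = 1
    ∧ ∀ a ∈ 𝒜, 0 ≤ wsfe P D A 𝒜 a := by
  classical
  have h00 : (0:ℕ) ∈ ({0,1}:Finset ℕ) := by simp
  have h11 : (1:ℕ) ∈ ({0,1}:Finset ℕ) := by simp
  have hYobs_eq : ∀ ω, Yobs D A 𝒜 Ypot ω = Ypot (D ω) (A ω) ω := by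
    intro ω
    unfold Yobs
    rw [Finset.sum_eq_single (D ω)]
    · rw [Finset.sum_eq_single (A ω)]
      · simp
      · intro b _ hb; simp [Ne.symm hb]
      · intro h; exact absurd (hAsupp ω) h
    · intro b _ hb
      exact Finset.sum_eq_zero fun a' _ => by simp [Ne.symm hb]
    · intro h
      exact absurd (by rcases hDbin ω with h0 | h0 <;> simp [h0]) h
  have hIchi : ∀ (d : ℕ) (a : Fin K → ℕ), Integrable (chiDA D A d a) P :=
    fun d a => integrable_chiDA P hD hA d a
  have hIY : ∀ d ∈ ({0,1}:Finset ℕ), ∀ a ∈ 𝒜, ∀ (d' : ℕ) (a' : Fin K → ℕ),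
      Integrable (fun ω => Ypot d a ω * chiDA D A d' a' ω) P :=
    fun d hd a ha d' a' => integrable_mul_chiDA (hInt d hd a ha) hD hA d' a'
  have hq : ∀ a : Fin K → ℕ, Pr P (evA A a)
      = Pr P (evDA D A 0 a) + Pr P (evDA D A 1 a) := by
    intro a
    have hpt : (fun ω => if A ω = a then (1:ℝ) else 0)
        = fun ω => chiDA D A 0 a ω + chiDA D A 1 a ω := by
      funext ω
      rcases hDbin ω with h0 | h0 <;> by_cases hAa : A ω = a <;>
        simp [chiDA, h0, hAa]
    rw [← exp_chiDA P hD hA 0 a, ← exp_chiDA P hD hA 1 a, ← exp_chiA P hA a, hpt]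
    exact integral_add (hIchi 0 a) (hIchi 1 a)
  have hE2 : ∀ a ∈ 𝒜,
      Exp P (fun ω => Ypot 0 a ω * chiDA D A 0 a ω)
      + Exp P (fun ω => Ypot 1 a ω * chiDA D A 1 a ω)
      - Δsfe * Pr P (evDA D A 1 a)
      - θ a * Pr P (evDA D A 0 a) - θ a * Pr P (evDA D A 1 a) = 0 := by
    intro a ha
    have hpt : ∀ ω, residSFE D A 𝒜 Ypot Δsfe θ ω * (if A ω = a then (1:ℝ) else 0)
        = Ypot 0 a ω * chiDA D A 0 a ω + Ypot 1 a ω * chiDA D A 1 a ω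
          - Δsfe * chiDA D A 1 a ω - θ a * chiDA D A 0 a ω - θ a * chiDA D A 1 a ω := by
      intro ω
      by_cases hAa : A ω = a
      · rcases hDbin ω with h0 | h0 <;>
          simp [residSFE, hYobs_eq ω, h0, hAa, chiDA, mul_ite, mul_one, mul_zero,
            Finset.sum_ite_eq, ha]
      · simp [residSFE, chiDA, hAa]
    have h := hO2 a ha
    rw [show (fun ω => residSFE D A 𝒜 Ypot Δsfe θ ω * (if A ω = a then (1:ℝ) else 0))
        = fun ω => Ypot 0 a ω * chiDA D A 0 a ω + Ypot 1 a ω * chiDA D A 1 a ω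
          - Δsfe * chiDA D A 1 a ω - θ a * chiDA D A 0 a ω - θ a * chiDA D A 1 a ω
      from funext hpt] at h
    have i1 := hIY 0 h00 a ha 0 a
    have i2 := hIY 1 h11 a ha 1 a
    have i3 : Integrable (fun ω => Δsfe * chiDA D A 1 a ω) P := (hIchi 1 a).const_mul Δsfe
    have i4 : Integrable (fun ω => θ a * chiDA D A 0 a ω) P := (hIchi 0 a).const_mul (θ a)
    have i5 : Integrable (fun ω => θ a * chiDA D A 1 a ω) P := (hIchi 1 a).const_mul (θ a)
    have i12 : Integrable (fun ω => Ypot 0 a ω * chiDA D A 0 a ω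
        + Ypot 1 a ω * chiDA D A 1 a ω) P := i1.add i2
    have i123 : Integrable (fun ω => Ypot 0 a ω * chiDA D A 0 a ω
        + Ypot 1 a ω * chiDA D A 1 a ω - Δsfe * chiDA D A 1 a ω) P := i12.sub i3
    have i1234 : Integrable (fun ω => Ypot 0 a ω * chiDA D A 0 a ω
        + Ypot 1 a ω * chiDA D A 1 a ω - Δsfe * chiDA D A 1 a ω
        - θ a * chiDA D A 0 a ω) P := i123.sub i4
    have s5 : Exp P (fun ω => Ypot 0 a ω * chiDA D A 0 a ω
          + Ypot 1 a ω * chiDA D A 1 a ω - Δsfe * chiDA D A 1 a ω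
          - θ a * chiDA D A 0 a ω - θ a * chiDA D A 1 a ω)
        = Exp P (fun ω => Ypot 0 a ω * chiDA D A 0 a ω
          + Ypot 1 a ω * chiDA D A 1 a ω - Δsfe * chiDA D A 1 a ω
          - θ a * chiDA D A 0 a ω) - Exp P (fun ω => θ a * chiDA D A 1 a ω) :=
      integral_sub i1234 i5
    have s4 : Exp P (fun ω => Ypot 0 a ω * chiDA D A 0 a ω
          + Ypot 1 a ω * chiDA D A 1 a ω - Δsfe * chiDA D A 1 a ω
          - θ a * chiDA D A 0 a ω)
        = Exp P (fun ω => Ypot 0 a ω * chiDA D A 0 a ω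
          + Ypot 1 a ω * chiDA D A 1 a ω - Δsfe * chiDA D A 1 a ω)
          - Exp P (fun ω => θ a * chiDA D A 0 a ω) := integral_sub i123 i4
    have s3 : Exp P (fun ω => Ypot 0 a ω * chiDA D A 0 a ω
          + Ypot 1 a ω * chiDA D A 1 a ω - Δsfe * chiDA D A 1 a ω)
        = Exp P (fun ω => Ypot 0 a ω * chiDA D A 0 a ω
          + Ypot 1 a ω * chiDA D A 1 a ω)
          - Exp P (fun ω => Δsfe * chiDA D A 1 a ω) := integral_sub i12 i3
    have s2 : Exp P (fun ω => Ypot 0 a ω * chiDA D A 0 a ω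
          + Ypot 1 a ω * chiDA D A 1 a ω)
        = Exp P (fun ω => Ypot 0 a ω * chiDA D A 0 a ω)
          + Exp P (fun ω => Ypot 1 a ω * chiDA D A 1 a ω) := integral_add i1 i2
    have c3 : Exp P (fun ω => Δsfe * chiDA D A 1 a ω)
        = Δsfe * Pr P (evDA D A 1 a) := by
      rw [show Exp P (fun ω => Δsfe * chiDA D A 1 a ω)
          = Δsfe * Exp P (chiDA D A 1 a) from integral_const_mul Δsfe _,
        exp_chiDA P hD hA 1 a]
    have c4 : Exp P (fun ω => θ a * chiDA D A 0 a ω)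
        = θ a * Pr P (evDA D A 0 a) := by
      rw [show Exp P (fun ω => θ a * chiDA D A 0 a ω)
          = θ a * Exp P (chiDA D A 0 a) from integral_const_mul (θ a) _,
        exp_chiDA P hD hA 0 a]
    have c5 : Exp P (fun ω => θ a * chiDA D A 1 a ω)
        = θ a * Pr P (evDA D A 1 a) := by
      rw [show Exp P (fun ω => θ a * chiDA D A 1 a ω)
          = θ a * Exp P (chiDA D A 1 a) from integral_const_mul (θ a) _,
        exp_chiDA P hD hA 1 a]
    rw [s5, s4, s3, s2, c3, c4, c5] at h
    exact h
  have hE1 : ∑ a ∈ 𝒜, (Exp P (fun ω => Ypot 1 a ω * chiDA D A 1 a ω)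
      - Δsfe * Pr P (evDA D A 1 a) - θ a * Pr P (evDA D A 1 a)) = 0 := by
    have hpt : ∀ ω, residSFE D A 𝒜 Ypot Δsfe θ ω * (D ω : ℝ)
        = ∑ a ∈ 𝒜, (Ypot 1 a ω * chiDA D A 1 a ω - Δsfe * chiDA D A 1 a ω
            - θ a * chiDA D A 1 a ω) := by
      intro ω
      rcases hDbin ω with h0 | h0
      · simp [residSFE, chiDA, h0]
      · simp [residSFE, hYobs_eq ω, h0, chiDA, mul_ite, mul_one, mul_zero,
          Finset.sum_ite_eq, hAsupp ω, Finset.sum_sub_distrib]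
    have h := hO1
    rw [show (fun ω => residSFE D A 𝒜 Ypot Δsfe θ ω * (D ω : ℝ))
        = fun ω => ∑ a ∈ 𝒜, (Ypot 1 a ω * chiDA D A 1 a ω - Δsfe * chiDA D A 1 a ω
            - θ a * chiDA D A 1 a ω) from funext hpt] at h
    have hintg : ∀ a ∈ 𝒜, Integrable (fun ω => Ypot 1 a ω * chiDA D A 1 a ω
        - Δsfe * chiDA D A 1 a ω - θ a * chiDA D A 1 a ω) P := fun a ha =>
      ((hIY 1 h11 a ha 1 a).sub ((hIchi 1 a).const_mul Δsfe)).sub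
        ((hIchi 1 a).const_mul (θ a))
    have hsplit : Exp P (fun ω => ∑ a ∈ 𝒜, (Ypot 1 a ω * chiDA D A 1 a ω
          - Δsfe * chiDA D A 1 a ω - θ a * chiDA D A 1 a ω))
        = ∑ a ∈ 𝒜, Exp P (fun ω => Ypot 1 a ω * chiDA D A 1 a ω
          - Δsfe * chiDA D A 1 a ω - θ a * chiDA D A 1 a ω) :=
      integral_finset_sum 𝒜 hintg
    have hterm : ∀ a ∈ 𝒜, Exp P (fun ω => Ypot 1 a ω * chiDA D A 1 a ω
          - Δsfe * chiDA D A 1 a ω - θ a * chiDA D A 1 a ω)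
        = Exp P (fun ω => Ypot 1 a ω * chiDA D A 1 a ω)
          - Δsfe * Pr P (evDA D A 1 a) - θ a * Pr P (evDA D A 1 a) := by
      intro a ha
      have i1 := hIY 1 h11 a ha 1 a
      have i3 : Integrable (fun ω => Δsfe * chiDA D A 1 a ω) P :=
        (hIchi 1 a).const_mul Δsfe
      have i5 : Integrable (fun ω => θ a * chiDA D A 1 a ω) P :=
        (hIchi 1 a).const_mul (θ a)
      have i13 : Integrable (fun ω => Ypot 1 a ω * chiDA D A 1 a ω
          - Δsfe * chiDA D A 1 a ω) P := i1.sub i3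
      have s2 : Exp P (fun ω => Ypot 1 a ω * chiDA D A 1 a ω
            - Δsfe * chiDA D A 1 a ω - θ a * chiDA D A 1 a ω)
          = Exp P (fun ω => Ypot 1 a ω * chiDA D A 1 a ω - Δsfe * chiDA D A 1 a ω)
            - Exp P (fun ω => θ a * chiDA D A 1 a ω) := integral_sub i13 i5
      have s1 : Exp P (fun ω => Ypot 1 a ω * chiDA D A 1 a ω - Δsfe * chiDA D A 1 a ω)
          = Exp P (fun ω => Ypot 1 a ω * chiDA D A 1 a ω)
            - Exp P (fun ω => Δsfe * chiDA D A 1 a ω) := integral_sub i1 i3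
      have c3 : Exp P (fun ω => Δsfe * chiDA D A 1 a ω)
          = Δsfe * Pr P (evDA D A 1 a) := by
        rw [show Exp P (fun ω => Δsfe * chiDA D A 1 a ω)
            = Δsfe * Exp P (chiDA D A 1 a) from integral_const_mul Δsfe _,
          exp_chiDA P hD hA 1 a]
      have c5 : Exp P (fun ω => θ a * chiDA D A 1 a ω)
          = θ a * Pr P (evDA D A 1 a) := by
        rw [show Exp P (fun ω => θ a * chiDA D A 1 a ω)
            = θ a * Exp P (chiDA D A 1 a) from integral_const_mul (θ a) _,
          exp_chiDA P hD hA 1 a]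
      rw [s2, s1, c3, c5]
    rw [hsplit, Finset.sum_congr rfl hterm] at h
    exact h
  have hCE0 : ∀ a ∈ 𝒜, CE P (Ypot 0 a) (evDA D A 0 a)
      = Exp P (fun ω => Ypot 0 a ω * chiDA D A 0 a ω) / Pr P (evDA D A 0 a) := by
    intro a _
    rw [CE]
    congr 1
    apply congrArg
    funext ω
    rw [chiDA_eq_indicator_one]
  have hCE01 : ∀ a ∈ 𝒜, CE P (Ypot 0 a) (evDA D A 1 a)
      = Exp P (fun ω => Ypot 0 a ω * chiDA D A 1 a ω) / Pr P (evDA D A 1 a) := by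
    intro a _
    rw [CE]
    congr 1
    apply congrArg
    funext ω
    rw [chiDA_eq_indicator_one]
  have hCEd : ∀ a ∈ 𝒜, CE P (fun ω => Ypot 1 a ω - Ypot 0 a ω) (evDA D A 1 a)
      = (Exp P (fun ω => Ypot 1 a ω * chiDA D A 1 a ω)
          - Exp P (fun ω => Ypot 0 a ω * chiDA D A 1 a ω)) / Pr P (evDA D A 1 a) := by
    intro a ha
    rw [CE]
    congr 1
    have hpt : (fun ω => (Ypot 1 a ω - Ypot 0 a ω)
          * (evDA D A 1 a).indicator (fun _ => (1:ℝ)) ω)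
        = fun ω => Ypot 1 a ω * chiDA D A 1 a ω - Ypot 0 a ω * chiDA D A 1 a ω := by
      funext ω
      rw [chiDA_eq_indicator_one]
      ring
    rw [Exp, hpt]
    exact integral_sub (hIY 1 h11 a ha 1 a) (hIY 0 h00 a ha 1 a)
  obtain ⟨hmain, hsum, hnn⟩ := sfe_algebra 𝒜 ⟨0, h𝒜0⟩
    (fun a => Pr P (evDA D A 0 a)) (fun a => Pr P (evDA D A 1 a))
    (fun a => Pr P (evA A a))
    (fun a => Exp P (fun ω => Ypot 0 a ω * chiDA D A 0 a ω))
    (fun a => Exp P (fun ω => Ypot 1 a ω * chiDA D A 1 a ω))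
    (fun a => Exp P (fun ω => Ypot 0 a ω * chiDA D A 1 a ω))
    (wsfe P D A 𝒜) θ
    (∑ a' ∈ 𝒜, condDgivenA P D A 1 a' * condDgivenA P D A 0 a' * Pr P (evA A a'))
    Δsfe
    (fun a ha => hpos 0 h00 a ha) (fun a ha => hpos 1 h11 a ha)
    (fun a _ => hq a) rfl (fun a _ => rfl) hE1 hE2
  refine ⟨?_, hsum, hnn⟩
  have hg1 : (∑ a ∈ 𝒜, wsfe P D A 𝒜 a *
        CE P (fun ω => Ypot 1 a ω - Ypot 0 a ω) (evDA D A 1 a))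
      = ∑ a ∈ 𝒜, wsfe P D A 𝒜 a *
        ((Exp P (fun ω => Ypot 1 a ω * chiDA D A 1 a ω)
          - Exp P (fun ω => Ypot 0 a ω * chiDA D A 1 a ω)) / Pr P (evDA D A 1 a)) :=
    Finset.sum_congr rfl fun a ha => by rw [hCEd a ha]
  have hg2 : (∑ a ∈ 𝒜, wsfe P D A 𝒜 a *
        (CE P (Ypot 0 a) (evDA D A 1 a) - CE P (Ypot 0 a) (evDA D A 0 a)))
      = ∑ a ∈ 𝒜, wsfe P D A 𝒜 a *
        (Exp P (fun ω => Ypot 0 a ω * chiDA D A 1 a ω) / Pr P (evDA D A 1 a)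
          - Exp P (fun ω => Ypot 0 a ω * chiDA D A 0 a ω) / Pr P (evDA D A 0 a)) :=
    Finset.sum_congr rfl fun a ha => by rw [hCE01 a ha, hCE0 a ha]
  rw [hg1, hg2]
  exact hmain
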